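/- arXiv:2311.12218 — 2 statements merged into one kernel-verified Lean document; each statement's English description precedes it below -/
import Mathlib

section
/- Let D = (Σ, Const) be a precedence-only declarative process and define M := Σ \ { a ∈ Σ : there exist distinct b,c ∈ Σ with b ≲occ c, c ≲occ b, and b ≲occ a }. Then Traces(D) = ⋃_I L((I, ≲occ|_I)), where the union is over all down-sets I of the poset (M, ≲occ|_M). In other words, a sequence τ is a trace of D if and only if there is a down-set I of (M, ≲occ|_M) such that τ is a linear extension of the poset (I, ≲occ|_I). -/
/-- The restriction `r|_I := r ∩ (I × I)` of a relation to a set. -/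
def restrictRel {α : Type*} (r : α → α → Prop) (I : Set α) : α → α → Prop :=
  fun a b => a ∈ I ∧ b ∈ I ∧ r a b

/-- A (first-passage) trace of a precedence-only declarative process. -/
def IsTraceP {α : Type*} (Prec : α → α → Prop) (τ : List α) : Prop :=
  τ.Nodup ∧ ∀ a b, Prec a b → b ∈ τ → [a, b].Sublist τ

/-- `τ` is a linear extension of the poset `(I, r)`. -/
def IsLinExt {α : Type*} (r : α → α → Prop) (I : Set α) (τ : List α) : Prop :=
  τ.Nodup ∧ (∀ x, x ∈ τ ↔ x ∈ I) ∧ ∀ a b, r a b → a ≠ b → [a, b].Sublist τ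

/-- The set `M := Σ \ { a : ∃ distinct b, c with b ≲occ c, c ≲occ b and b ≲occ a }`. -/
def Mset {α : Type*} (occ : α → α → Prop) : Set α :=
  {a | ¬ ∃ b c : α, b ≠ c ∧ occ b c ∧ occ c b ∧ occ b a}

open List

lemma pair_sublist_iff {α : Type*} [DecidableEq α] :
    ∀ (τ : List α), τ.Nodup → ∀ a b : α,
      [a, b].Sublist τ ↔ a ∈ τ ∧ b ∈ τ ∧ τ.idxOf a < τ.idxOf b := by
  intro τ
  induction τ with
  | nil => simp
  | cons x ts ih =>
    intro hnd a b
    obtain ⟨hx, hts⟩ := List.nodup_cons.mp hnd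
    constructor
    · intro h
      cases h with
      | cons _ h' =>
        obtain ⟨ha, hb, hlt⟩ := (ih hts a b).mp h'
        have hax : a ≠ x := fun e => hx (e ▸ ha)
        have hbx : b ≠ x := fun e => hx (e ▸ hb)
        refine ⟨mem_cons_of_mem _ ha, mem_cons_of_mem _ hb, ?_⟩
        rw [idxOf_cons_ne _ hax.symm, idxOf_cons_ne _ hbx.symm]
        omega
      | cons_cons _ h' =>
        have hb : b ∈ ts := singleton_sublist.mp h'
        have hbx : b ≠ x := fun e => hx (e ▸ hb)
        refine ⟨mem_cons_self, mem_cons_of_mem _ hb, ?_⟩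
        rw [idxOf_cons_self, idxOf_cons_ne _ hbx.symm]
        omega
    · rintro ⟨ha, hb, hlt⟩
      by_cases hax : a = x
      · subst hax
        have hbx : b ≠ a := by
          intro e; subst e; omega
        have hb' : b ∈ ts := (mem_cons.mp hb).resolve_left hbx
        exact (singleton_sublist.mpr hb').cons₂ a
      · have ha' : a ∈ ts := (mem_cons.mp ha).resolve_left hax
        have hbx : b ≠ x := by
          intro e; subst e
          rw [idxOf_cons_self] at hlt; omega
        have hb' : b ∈ ts := (mem_cons.mp hb).resolve_left hbx
        rw [idxOf_cons_ne _ (Ne.symm hax), idxOf_cons_ne _ hbx.symm] at hlt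
        exact ((ih hts a b).mpr ⟨ha', hb', by omega⟩).cons x

lemma pair_sublist_trans {α : Type*} [DecidableEq α] {τ : List α} (h : τ.Nodup)
    {a b c : α} (h1 : [a, b].Sublist τ) (h2 : [b, c].Sublist τ) : [a, c].Sublist τ := by
  obtain ⟨ha, hb, l1⟩ := (pair_sublist_iff τ h a b).mp h1
  obtain ⟨_, hc, l2⟩ := (pair_sublist_iff τ h b c).mp h2
  exact (pair_sublist_iff τ h a c).mpr ⟨ha, hc, by omega⟩

lemma pair_sublist_asymm {α : Type*} [DecidableEq α] {τ : List α} (h : τ.Nodup)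
    {a b : α} (h1 : [a, b].Sublist τ) (h2 : [b, a].Sublist τ) : False := by
  obtain ⟨_, _, l1⟩ := (pair_sublist_iff τ h a b).mp h1
  obtain ⟨_, _, l2⟩ := (pair_sublist_iff τ h b a).mp h2
  omega

lemma trace_occ {α : Type*} {Prec : α → α → Prop} {τ : List α}
    (hτ : IsTraceP Prec τ) {a b : α}
    (h : Relation.ReflTransGen Prec a b) (hb : b ∈ τ) :
    a ∈ τ ∧ (a = b ∨ [a, b].Sublist τ) := by
  classical
  revert hb
  induction h with
  | refl => intro hb; exact ⟨hb, Or.inl rfl⟩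
  | @tail c b hac hcb ih =>
    intro hb
    have hsub : [c, b].Sublist τ := hτ.2 _ _ hcb hb
    have hc : c ∈ τ := hsub.subset (by simp)
    obtain ⟨ha, hd⟩ := ih hc
    refine ⟨ha, Or.inr ?_⟩
    rcases hd with rfl | hd
    · exact hsub
    · exact pair_sublist_trans hτ.1 hd hsub

/-- for a precedence-only declarative process, `τ` is a trace of
`D` if and only if `τ` is a linear extension of `(I, ≲occ|_I)` for some
down-set `I` of the poset `(M, ≲occ|_M)`, where `≲occ = Prec^⊕`. -/
theorem prec_only_traces_eq_union_linExts {α : Type*} [Fintype α]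
    (Prec : α → α → Prop) (hP : ∀ a b, Prec a b → a ≠ b)
    (τ : List α) :
    IsTraceP Prec τ ↔
      ∃ I : Set α,
        I ⊆ Mset (Relation.ReflTransGen Prec) ∧
        (∀ a ∈ Mset (Relation.ReflTransGen Prec),
          ∀ b ∈ Mset (Relation.ReflTransGen Prec),
            Relation.ReflTransGen Prec a b → b ∈ I → a ∈ I) ∧
        IsLinExt (restrictRel (Relation.ReflTransGen Prec) I) I τ := by
  classical
  constructor
  · intro hτ
    refine ⟨{x | x ∈ τ}, ?_, ?_, hτ.1, fun x => Iff.rfl, ?_⟩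
    · rintro a ha ⟨b, c, hbc, hb_c, hc_b, hba⟩
      have hb : b ∈ τ := (trace_occ hτ hba ha).1
      obtain ⟨hc, hd1⟩ := trace_occ hτ hc_b hb
      obtain ⟨_, hd2⟩ := trace_occ hτ hb_c hc
      rcases hd1 with rfl | hd1
      · exact hbc rfl
      · rcases hd2 with rfl | hd2
        · exact hbc rfl
        · exact pair_sublist_asymm hτ.1 hd1 hd2
    · intro a _ b _ hab hb
      exact (trace_occ hτ hab hb).1
    · rintro a b ⟨ha, hb, hab⟩ hne
      rcases (trace_occ hτ hab hb).2 with rfl | hs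
      · exact absurd rfl hne
      · exact hs
  · rintro ⟨I, hIM, hDown, hnd, hmem, hpairs⟩
    refine ⟨hnd, fun a b hab hb => ?_⟩
    have hbI : b ∈ I := (hmem b).mp hb
    have hbM : b ∈ Mset (Relation.ReflTransGen Prec) := hIM hbI
    have haM : a ∈ Mset (Relation.ReflTransGen Prec) := by
      rintro ⟨b', c', hbc, h1, h2, h3⟩
      exact hbM ⟨b', c', hbc, h1, h2, h3.tail hab⟩
    have haI : a ∈ I := hDown a haM b hbM (Relation.ReflTransGen.single hab) hbI
    exact hpairs a b ⟨haI, hbI, Relation.ReflTransGen.single hab⟩ (hP a b hab)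
end

section
/- Let D = (Σ, Const) be a successor-only declarative process and define CoreOcc(D) := { K ∈ Σ/≲occ : ⪯_K is antisymmetric }. Then Traces(D) = ⋃_{S ⊆ CoreOcc(D)} L(( ⋃_{K ∈ S} K, ⋃_{K ∈ S} ⪯_K )); that is, a sequence τ is a trace of D if and only if there is a subset S of CoreOcc(D) such that τ is a linear extension of the poset whose underlying set is the disjoint union of the classes in S and whose order is the disjoint union of the relations ⪯_K for K ∈ S. -/
/-- The implied-occurrence relation `≲occ` of a successor-only process. -/
def occS {α : Type*} (Succ : α → α → Prop) : α → α → Prop :=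
  Relation.ReflTransGen (fun a b => Succ a b ∨ Succ b a)

/-- `⪯_I` for the successor-only case (`→ord = Succ`). -/
def preS {α : Type*} (Succ : α → α → Prop) (I : Set α) : α → α → Prop :=
  Relation.ReflTransGen (restrictRel Succ I)

/-- A (first-passage) trace of a successor-only declarative process. -/
def IsTraceS {α : Type*} (Succ : α → α → Prop) (τ : List α) : Prop :=
  τ.Nodup ∧ ∀ a b, Succ a b → ((a ∈ τ ↔ b ∈ τ) ∧ (a ∈ τ → [a, b].Sublist τ))

/-- `CoreOcc(D)`: the `≲occ`-equivalence classes `K` for which `⪯_K` is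
antisymmetric. -/
def CoreOcc {α : Type*} (Succ : α → α → Prop) : Set (Set α) :=
  {K | (∃ a : α, K = {b | occS Succ a b}) ∧
    ∀ x y, preS Succ K x y → preS Succ K y x → x = y}

lemma pair_sublist_trans_s17 {α : Type*} : ∀ {l : List α}, l.Nodup →
    ∀ a b c : α, [a,b].Sublist l → [b,c].Sublist l → [a,c].Sublist l := by
  intro l
  induction l with
  | nil => intro _ a b c h1 _; exact absurd h1 (by simp)
  | cons x t ih =>
    intro hnd a b c h1 h2
    rw [List.nodup_cons] at hnd
    cases h1 with
    | cons _ h1' =>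
      cases h2 with
      | cons _ h2' => exact (ih hnd.2 a b c h1' h2').cons x
      | cons_cons _ h2' => exact absurd (h1'.subset (by simp)) hnd.1
    | cons_cons _ h1' =>
      cases h2 with
      | cons _ h2' =>
        exact List.Sublist.cons₂ _ ((List.sublist_cons_self b [c]).trans h2')
      | cons_cons _ h2' => exact List.Sublist.cons₂ _ h2'

/-- for a successor-only declarative process, `τ` is a trace iff
there is a subset `S ⊆ CoreOcc(D)` such that `τ` is a linear extension of the
poset whose underlying set is the (disjoint) union `⋃₀ S` of the classes in
`S` and whose order is the disjoint union of the relations `⪯_K`, `K ∈ S`. -/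
theorem succ_only_traces_eq_union_linExts {α : Type*} [Fintype α]
    (Succ : α → α → Prop) (hS : ∀ a b, Succ a b → a ≠ b)
    (τ : List α) :
    IsTraceS Succ τ ↔
      ∃ S ⊆ CoreOcc Succ,
        IsLinExt (fun a b => ∃ K ∈ S, a ∈ K ∧ b ∈ K ∧ preS Succ K a b)
          (⋃₀ S) τ := by
  constructor
  · rintro ⟨hnd, htr⟩
    have hmem : ∀ a b, a ∈ τ → occS Succ a b → b ∈ τ := by
      intro a b ha h
      induction h with
      | refl => exact ha
      | tail _ hstep ih =>
        rcases hstep with h' | h'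
        · exact ((htr _ _ h').1).mp ih
        · exact ((htr _ _ h').1).mpr ih
    have hstep : ∀ (K : Set α), (∀ x ∈ K, x ∈ τ) →
        ∀ x y, restrictRel Succ K x y → [x, y].Sublist τ := by
      rintro K hK x y ⟨hx, _, hxy⟩
      exact (htr x y hxy).2 (hK x hx)
    have htg : ∀ (K : Set α), (∀ x ∈ K, x ∈ τ) →
        ∀ x y, Relation.TransGen (restrictRel Succ K) x y → [x, y].Sublist τ := by
      intro K hK x y h
      induction h with
      | single h' => exact hstep K hK _ _ h'
      | tail _ h' ih => exact pair_sublist_trans_s17 hnd _ _ _ ih (hstep K hK _ _ h')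
    refine ⟨{K | ∃ a ∈ τ, K = {b | occS Succ a b}}, ?_, hnd, ?_, ?_⟩
    · rintro K ⟨a, ha, rfl⟩
      refine ⟨⟨a, rfl⟩, ?_⟩
      intro x y hxy hyx
      rcases Relation.reflTransGen_iff_eq_or_transGen.mp hxy with rfl | hxy'
      · rfl
      rcases Relation.reflTransGen_iff_eq_or_transGen.mp hyx with rfl | hyx'
      · rfl
      have hKτ : ∀ z ∈ {b | occS Succ a b}, z ∈ τ := fun z hz => hmem a z ha hz
      have h1 := htg _ hKτ x y hxy'
      have h2 := htg _ hKτ y x hyx'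
      have := (pair_sublist_trans_s17 hnd x y x h1 h2).nodup hnd
      simp at this
    · intro x
      constructor
      · intro hx
        exact ⟨{b | occS Succ x b}, ⟨x, hx, rfl⟩, Relation.ReflTransGen.refl⟩
      · rintro ⟨K, ⟨a, ha, rfl⟩, hx⟩
        exact hmem a x ha hx
    · rintro a b ⟨K, ⟨c, hc, rfl⟩, haK, hbK, hpre⟩ hne
      rcases Relation.reflTransGen_iff_eq_or_transGen.mp hpre with rfl | htg'
      · exact absurd rfl hne.symm
      · exact htg _ (fun z hz => hmem c z hc hz) a b htg'
  · rintro ⟨S, hScore, hnd, hmemI, hord⟩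
    refine ⟨hnd, ?_⟩
    intro a b hab
    have hne := hS a b hab
    have habK : ∀ K ∈ S, a ∈ K → b ∈ K := by
      intro K hK haK
      obtain ⟨⟨c, rfl⟩, _⟩ := hScore hK
      exact Relation.ReflTransGen.tail haK (Or.inl hab)
    have hbaK : ∀ K ∈ S, b ∈ K → a ∈ K := by
      intro K hK hbK
      obtain ⟨⟨c, rfl⟩, _⟩ := hScore hK
      exact Relation.ReflTransGen.tail hbK (Or.inr hab)
    constructor
    · constructor
      · intro ha
        obtain ⟨K, hK, haK⟩ := (hmemI a).mp ha
        exact (hmemI b).mpr ⟨K, hK, habK K hK haK⟩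
      · intro hb
        obtain ⟨K, hK, hbK⟩ := (hmemI b).mp hb
        exact (hmemI a).mpr ⟨K, hK, hbaK K hK hbK⟩
    · intro ha
      obtain ⟨K, hK, haK⟩ := (hmemI a).mp ha
      have hbK := habK K hK haK
      exact hord a b ⟨K, hK, haK, hbK, Relation.ReflTransGen.single ⟨haK, hbK, hab⟩⟩ hne
end
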